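/- Let p be a prime, G a finite abelian p-group isomorphic to Z_{p^{e_1}} ⊕ ... ⊕ Z_{p^{e_l}}, and g_1, ..., g_s a sequence in G (written multiplicatively) with s ≥ 1 + Σ_{i=1}^l (p^{e_i} - 1). Then the product ∏_{i=1}^s (1 - g_i) equals 0 in the group algebra F_p[G]. -/

import Mathlib

open Finset MonoidAlgebra

private lemma telescope_aux {R : Type*} [CommRing R] (b : ℕ → R) (n : ℕ) :
    1 - ∏ j ∈ Finset.range n, b j
      = ∑ j ∈ Finset.range n, (∏ k ∈ Finset.range j, b k) * (1 - b j) := by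
  have h : ∀ j ∈ Finset.range n,
      (∏ k ∈ Finset.range j, b k) * (1 - b j)
        = (∏ k ∈ Finset.range j, b k) - ∏ k ∈ Finset.range (j + 1), b k := by
    intro j _
    rw [Finset.prod_range_succ]; ring
  rw [Finset.sum_congr rfl h, Finset.sum_range_sub' (fun j => ∏ k ∈ Finset.range j, b k) n]
  simp

theorem stmt2 {p l : ℕ} (hp : p.Prime) (hl : 0 < l) (e : Fin l → ℕ)
    (he : ∀ i, 1 ≤ e i)
    {G : Type*} [CommGroup G]
    (φ : G ≃* ∀ i : Fin l, Multiplicative (ZMod (p ^ e i)))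
    {s : ℕ} (hs : 1 + ∑ i, (p ^ e i - 1) ≤ s) (g : Fin s → G) :
    ∏ i, (1 - MonoidAlgebra.of (ZMod p) G (g i)) = 0 := by
  classical
  haveI : Fact p.Prime := ⟨hp⟩
  haveI : CharP (MonoidAlgebra (ZMod p) G) p :=
    charP_of_injective_ringHom
      (f := MonoidAlgebra.singleOneRingHom (R := ZMod p) (M := G))
      (MonoidAlgebra.single_right_injective (m := (1 : G))) p
  haveI : ∀ j : Fin l, NeZero (p ^ e j) := fun j =>
    ⟨pow_ne_zero _ hp.ne_zero⟩
  set of' : G →* MonoidAlgebra (ZMod p) G := MonoidAlgebra.of (ZMod p) G with hof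
  -- key nilpotency fact
  have key : ∀ (h : G) (n : ℕ), h ^ p ^ n = 1 → (1 - of' h) ^ p ^ n = 0 := by
    intro h n hh
    rw [sub_pow_char_pow, one_pow, ← map_pow, hh, map_one, sub_self]
  -- generators of the cyclic components
  set x : Fin l → G := fun j =>
    φ.symm (Pi.mulSingle j (Multiplicative.ofAdd (1 : ZMod (p ^ e j)))) with hxdef
  have hx : ∀ j, x j ^ p ^ e j = 1 := by
    intro j
    rw [hxdef, ← map_pow, ← Pi.mulSingle_pow, ← ofAdd_nsmul]
    have h0 : (p ^ e j) • (1 : ZMod (p ^ e j)) = 0 := by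
      simp [nsmul_eq_mul]
    rw [h0]
    simpa using map_one φ.symm
  -- components of the g i
  set c : Fin s → Fin l → G := fun i j => φ.symm (Pi.mulSingle j (φ (g i) j)) with hcdef
  have hg : ∀ i, g i = ∏ j, c i j := by
    intro i
    apply φ.injective
    rw [map_prod]
    simp only [hcdef, MulEquiv.apply_symm_apply]
    exact (Finset.univ_prod_mulSingle (φ (g i))).symm
  -- each component is a power of the corresponding generator
  have hpow : ∀ i j, ∃ k : ℕ, c i j = x j ^ k := by
    intro i j
    refine ⟨(Multiplicative.toAdd (φ (g i) j)).val, ?_⟩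
    have h1 : Multiplicative.ofAdd (1 : ZMod (p ^ e j))
        ^ (Multiplicative.toAdd (φ (g i) j)).val = φ (g i) j := by
      rw [← ofAdd_nsmul, nsmul_eq_mul, mul_one]
      rw [ZMod.natCast_rightInverse _]
      exact ofAdd_toAdd _
    show φ.symm (Pi.mulSingle j (φ (g i) j)) = _
    rw [hxdef, ← map_pow, ← Pi.mulSingle_pow, h1]
  have hdvd : ∀ i j, (1 - of' (x j)) ∣ (1 - of' (c i j)) := by
    intro i j
    obtain ⟨k, hk⟩ := hpow i j
    rw [hk, map_pow]
    simpa using sub_dvd_pow_sub_pow 1 (of' (x j)) k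
  -- the factors, indexed over ℕ
  set B : Fin s → ℕ → MonoidAlgebra (ZMod p) G := fun i j =>
    if h : j < l then of' (c i ⟨j, h⟩) else 1 with hBdef
  have expand : ∀ i, 1 - of' (g i)
      = ∑ j ∈ Finset.range l, (∏ k ∈ Finset.range j, B i k) * (1 - B i j) := by
    intro i
    rw [← telescope_aux]
    congr 1
    rw [hg i, map_prod]
    have hB : ∀ j : Fin l, of' (c i j) = B i (j : ℕ) := by
      intro j
      rw [hBdef]
      simp [j.isLt]
    rw [Finset.prod_congr rfl fun j _ => hB j]
    exact Fin.prod_univ_eq_prod_range (fun j => B i j) l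
  calc ∏ i, (1 - of' (g i))
      = ∏ i, ∑ j ∈ Finset.range l, (∏ k ∈ Finset.range j, B i k) * (1 - B i j) := by
        exact Finset.prod_congr rfl fun i _ => expand i
    _ = ∑ y ∈ Fintype.piFinset (fun _ : Fin s => Finset.range l),
          ∏ i, (∏ k ∈ Finset.range (y i), B i k) * (1 - B i (y i)) :=
        Finset.prod_univ_sum _ _
    _ = 0 := by
        apply Finset.sum_eq_zero
        intro y hy
        have hyl : ∀ i, y i < l := fun i =>
          Finset.mem_range.mp (Fintype.mem_piFinset.mp hy i)
        set F : Fin s → Fin l := fun i => ⟨y i, hyl i⟩ with hFdef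
        -- pigeonhole
        obtain ⟨J, hJ⟩ : ∃ j : Fin l,
            p ^ e j ≤ (Finset.univ.filter fun i => F i = j).card := by
          by_contra hcon
          push_neg at hcon
          have hsum : ∑ j : Fin l, (Finset.univ.filter fun i => F i = j).card = s := by
            rw [← Finset.card_eq_sum_card_fiberwise (fun i _ => Finset.mem_univ (F i))]
            simp
          have hle : ∀ j : Fin l,
              (Finset.univ.filter fun i => F i = j).card ≤ p ^ e j - 1 :=
            fun j => Nat.le_sub_one_of_lt (hcon j)
          have : s ≤ ∑ j, (p ^ e j - 1) := hsum ▸ Finset.sum_le_sum fun j _ => hle j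
          omega
        rw [Finset.prod_mul_distrib]
        have hzero : ∏ i, (1 - B i (y i)) = 0 := by
          have hfiber : ∏ i ∈ Finset.univ.filter (fun i => F i = J),
              (1 - B i (y i)) = 0 := by
            have h1 : ∏ i ∈ Finset.univ.filter (fun i => F i = J), (1 - of' (x J))
                ∣ ∏ i ∈ Finset.univ.filter (fun i => F i = J), (1 - B i (y i)) := by
              apply Finset.prod_dvd_prod_of_dvd
              intro i hi
              have hiJ : F i = J := (Finset.mem_filter.mp hi).2
              have : B i (y i) = of' (c i (F i)) := by
                rw [hBdef]
                simp [hyl i, hFdef]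
              rw [this, hiJ]
              exact hdvd i J
            rw [Finset.prod_const] at h1
            have hd0 : (1 - of' (x J)) ^
                (Finset.univ.filter fun i => F i = J).card = 0 := by
              rw [← Nat.add_sub_cancel' hJ, pow_add, key (x J) (e J) (hx J), zero_mul]
            rw [hd0] at h1
            exact zero_dvd_iff.mp h1
          have h2 : ∏ i ∈ Finset.univ.filter (fun i => F i = J), (1 - B i (y i))
              ∣ ∏ i, (1 - B i (y i)) :=
            Finset.prod_dvd_prod_of_subset _ _ _ (Finset.filter_subset _ _)
          rw [hfiber] at h2
          exact zero_dvd_iff.mp h2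
        rw [hzero, mul_zero]
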